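/- Let F : A ‚Üí k-Mod be a functor on a small additive category. Then cr_d(F) = 0 if and only if cr_d^{op}(F) = 0, where cr_d^{op}(F) : ŌĄ_d F ‚Üí F is the alternating sum ő£_{I‚äÜ{0,...,d}} (‚ąí1)^{|I|} F(p_I) over the natural projections p_I : t_d ‚Üí id. -/

import Mathlib

open CategoryTheory CategoryTheory.Limits

noncomputable section

variable {A : Type*} [Category A] [Preadditive A] [HasFiniteBiproducts A]
variable {D : Type*} [Category D] [Preadditive D]

/-- `t d : a ↦ a^{⊕(d+1)}` -/
@[simps] def tFun (A : Type*) [Category A] [Preadditive A] [HasFiniteBiproducts A] (d : ℕ) :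
    A ⥤ A where
  obj a := ⨁ (fun _ : Fin (d + 1) => a)
  map f := biproduct.map (fun _ => f)

/-- `u_I : id ⟶ t_d` -/
@[simps] def uNat (A : Type*) [Category A] [Preadditive A] [HasFiniteBiproducts A] (d : ℕ)
    (I : Finset (Fin (d + 1))) : 𝟭 A ⟶ tFun A d where
  app a := biproduct.lift (fun i => if i ∈ I then 𝟙 a else 0)
  naturality a b f := by
    change f ≫ (biproduct.lift (fun i => if i ∈ I then 𝟙 b else 0) : b ⟶ ⨁ (fun _ : Fin (d + 1) => b)) =
      biproduct.lift (fun i => if i ∈ I then 𝟙 a else 0) ≫ biproduct.map (fun _ => f)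
    refine biproduct.hom_ext _ _ fun j => ?_
    by_cases h : j ∈ I <;> simp [h]

/-- `p_I : t_d ⟶ id` -/
@[simps] def pNat (A : Type*) [Category A] [Preadditive A] [HasFiniteBiproducts A] (d : ℕ)
    (I : Finset (Fin (d + 1))) : tFun A d ⟶ 𝟭 A where
  app a := biproduct.desc (fun i => if i ∈ I then 𝟙 a else 0)
  naturality a b f := by
    change (biproduct.map (fun _ => f) : ⨁ (fun _ : Fin (d + 1) => a) ⟶ ⨁ (fun _ : Fin (d + 1) => b)) ≫
      biproduct.desc (fun i => if i ∈ I then 𝟙 b else 0) = biproduct.desc (fun i => if i ∈ I then 𝟙 a else 0) ≫ f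
    refine biproduct.hom_ext' _ _ fun j => ?_
    by_cases h : j ∈ I <;> simp [h]

/-- the cross effect `cr_d(F) : F ⟶ τ_d F` -/
@[simps] def crNat (d : ℕ) (F : A ⥤ D) : F ⟶ tFun A d ⋙ F where
  app a := ∑ I : Finset (Fin (d + 1)), (-1 : ℤ) ^ I.card • F.map ((uNat A d I).app a)
  naturality a b f := by
    simp only [Functor.comp_map, Preadditive.comp_sum, Preadditive.sum_comp,
      Preadditive.comp_zsmul, Preadditive.zsmul_comp]
    refine Finset.sum_congr rfl (fun I _ => ?_)
    have h := (uNat A d I).naturality f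
    simp only [Functor.id_map] at h
    rw [← F.map_comp, ← F.map_comp, h]

/-- the co-cross effect `cr_d^{op}(F) : τ_d F ⟶ F` -/
@[simps] def crOpNat (d : ℕ) (F : A ⥤ D) : tFun A d ⋙ F ⟶ F where
  app a := ∑ I : Finset (Fin (d + 1)), (-1 : ℤ) ^ I.card • F.map ((pNat A d I).app a)
  naturality a b f := by
    simp only [Functor.comp_map, Preadditive.comp_sum, Preadditive.sum_comp,
      Preadditive.comp_zsmul, Preadditive.zsmul_comp]
    refine Finset.sum_congr rfl (fun I _ => ?_)
    have h := (pNat A d I).naturality f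
    simp only [Functor.id_map] at h
    rw [← F.map_comp, ← F.map_comp, h]

/-- `F` is polynomial of degree at most `d`. -/
def PolyDeg (d : ℕ) (F : A ⥤ D) : Prop := crNat d F = 0

end

noncomputable section

section CrAux

variable {A : Type*} [Category A] [Preadditive A] [HasFiniteBiproducts A]

def piI (A : Type*) [Category A] [Preadditive A] [HasFiniteBiproducts A] (d : ℕ)
    (I : Finset (Fin (d + 1))) (a : A) : (tFun A d).obj a ⟶ (tFun A d).obj a :=
  biproduct.map (fun j => if j ∈ I then 𝟙 a else 0)

lemma piI_eq_sum (d : ℕ) (I : Finset (Fin (d + 1))) (a : A) :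
    piI A d I a = ∑ j ∈ I, piI A d {j} a := by
  change (biproduct.map (fun j => if j ∈ I then 𝟙 a else 0) : (⨁ fun _ : Fin (d + 1) => a) ⟶ (⨁ fun _ : Fin (d + 1) => a)) = ∑ j ∈ I, (biproduct.map (fun k => if k ∈ ({j} : Finset (Fin (d + 1))) then 𝟙 a else 0) : (⨁ fun _ : Fin (d + 1) => a) ⟶ (⨁ fun _ : Fin (d + 1) => a))
  refine biproduct.hom_ext _ _ fun kk => ?_
  simp only [piI, biproduct.map_π, Preadditive.sum_comp, Finset.mem_singleton]
  by_cases h : kk ∈ I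
  · rw [Finset.sum_eq_single kk]
    · simp [h]
    · intro b hb hne; simp [Ne.symm hne]
    · intro hk; exact absurd h hk
  · rw [Finset.sum_eq_zero]
    · simp [h]
    · intro b hb
      have : kk ≠ b := fun e => h (e ▸ hb)
      simp [this]

lemma uApp_comp_desc (d : ℕ) (I : Finset (Fin (d + 1))) (a : A) :
    (uNat A d I).app ((tFun A d).obj a) ≫ biproduct.desc (fun j => piI A d {j} a)
      = piI A d I a := by
  rw [piI_eq_sum]
  rw [uNat_app]
  erw [biproduct.lift_desc]
  simp only [uNat_app, biproduct.lift_desc, ite_comp, Category.id_comp, Limits.zero_comp,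
    Finset.sum_ite_mem, Finset.univ_inter]
  simp

lemma lift_comp_pApp (d : ℕ) (I : Finset (Fin (d + 1))) (a : A) :
    biproduct.lift (fun j => piI A d {j} a) ≫ (pNat A d I).app ((tFun A d).obj a)
      = piI A d I a := by
  rw [piI_eq_sum]
  simp only [pNat_app, biproduct.lift_desc, comp_ite, Category.comp_id, Limits.comp_zero,
    Finset.sum_ite_mem, Finset.univ_inter]

lemma piI_comp_pUniv (d : ℕ) (I : Finset (Fin (d + 1))) (a : A) :
    piI A d I a ≫ (pNat A d (Finset.univ)).app a = (pNat A d I).app a := by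
  change (biproduct.map (fun j => if j ∈ I then 𝟙 a else 0) : (⨁ fun _ : Fin (d + 1) => a) ⟶ (⨁ fun _ : Fin (d + 1) => a)) ≫ biproduct.desc (fun i => if i ∈ Finset.univ then 𝟙 a else 0) = (biproduct.desc (fun i => if i ∈ I then 𝟙 a else 0) : (⨁ fun _ : Fin (d + 1) => a) ⟶ a)
  refine biproduct.hom_ext' _ _ fun j => ?_
  by_cases h : j ∈ I <;> simp [piI, h]

lemma uUniv_comp_piI (d : ℕ) (I : Finset (Fin (d + 1))) (a : A) :
    (uNat A d (Finset.univ)).app a ≫ piI A d I a = (uNat A d I).app a := by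
  change biproduct.lift (fun i => if i ∈ Finset.univ then 𝟙 a else 0) ≫ (biproduct.map (fun j => if j ∈ I then 𝟙 a else 0) : (⨁ fun _ : Fin (d + 1) => a) ⟶ (⨁ fun _ : Fin (d + 1) => a)) = (biproduct.lift (fun i => if i ∈ I then 𝟙 a else 0) : a ⟶ (⨁ fun _ : Fin (d + 1) => a))
  refine biproduct.hom_ext _ _ fun j => ?_
  by_cases h : j ∈ I <;> simp [piI, h]

end CrAux

/-- `cr_d(F) = 0` iff `cr_d^{op}(F) = 0`. -/
theorem stmt3 (k : Type) [CommRing k] (A : Type) [SmallCategory A] [Preadditive A]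
    [HasFiniteBiproducts A] (d : ℕ) (F : A ⥤ ModuleCat k) :
    crNat d F = 0 ↔ crOpNat d F = 0 := by
  constructor
  · intro h
    refine NatTrans.ext (funext fun a => ?_)
    have key : (∑ I : Finset (Fin (d + 1)),
        (-1 : ℤ) ^ I.card • F.map (piI A d I a)) = 0 := by
      have h2 : (crNat d F).app ((tFun A d).obj a) = 0 := by rw [h]; rfl
      have h3 := congrArg
        (fun (g : F.obj ((tFun A d).obj a) ⟶ F.obj ((tFun A d).obj ((tFun A d).obj a))) => g ≫ F.map (X := (tFun A d).obj ((tFun A d).obj a)) (Y := (tFun A d).obj a) (biproduct.desc (fun j => piI A d {j} a))) h2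
      simp only [crNat_app, Preadditive.sum_comp, Preadditive.zsmul_comp,
        Limits.zero_comp, ← Functor.map_comp, uApp_comp_desc] at h3
      rw [← h3]
      refine Finset.sum_congr rfl fun I _ => ?_
      rw [← uApp_comp_desc]
      erw [F.map_comp]
    have h4 : (crOpNat d F).app a
        = (∑ I : Finset (Fin (d + 1)), (-1 : ℤ) ^ I.card • F.map (piI A d I a))
            ≫ F.map ((pNat A d Finset.univ).app a) := by
      simp only [crOpNat_app, Preadditive.sum_comp, Preadditive.zsmul_comp,
        ← Functor.map_comp, piI_comp_pUniv]
    rw [h4, key, Limits.zero_comp]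
    rfl
  · intro h
    refine NatTrans.ext (funext fun a => ?_)
    have key : (∑ I : Finset (Fin (d + 1)),
        (-1 : ℤ) ^ I.card • F.map (piI A d I a)) = 0 := by
      have h2 : (crOpNat d F).app ((tFun A d).obj a) = 0 := by rw [h]; rfl
      have h3 := congrArg
        (fun (g : F.obj ((tFun A d).obj ((tFun A d).obj a)) ⟶ F.obj ((tFun A d).obj a)) => F.map (X := (tFun A d).obj a) (Y := (tFun A d).obj ((tFun A d).obj a)) (biproduct.lift (fun j => piI A d {j} a)) ≫ g) h2
      simp only [crOpNat_app, Preadditive.comp_sum, Preadditive.comp_zsmul,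
        Limits.comp_zero, ← Functor.map_comp, lift_comp_pApp] at h3
      rw [← h3]
      refine Finset.sum_congr rfl fun I _ => ?_
      rw [← lift_comp_pApp]
      erw [F.map_comp]
      rfl
    have h4 : (crNat d F).app a
        = F.map ((uNat A d Finset.univ).app a)
            ≫ (∑ I : Finset (Fin (d + 1)), (-1 : ℤ) ^ I.card • F.map (piI A d I a)) := by
      simp only [crNat_app, Preadditive.comp_sum, Preadditive.comp_zsmul,
        ← Functor.map_comp, uUniv_comp_piI]
    rw [h4, key, Limits.comp_zero]
    rfl

end
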